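/- There exists a complex Hilbert space H and a family 𝒯 of operators on H of norm at most 1 such that 𝒯, viewed as a family of maps H₁ → H₁, is UEC for the weak uniformity, while the family of adjoints 𝒯* = {T* : T ∈ 𝒯} is NOT UEC for the weak uniformity. (Concretely, one may take H = ℓ²(ℕ) and 𝒯 = {S_r^n}_{n∈ℕ}, the powers of the right unilateral shift.) -/

import Mathlib

open scoped InnerProductSpace

/-- A family of maps `F k : H → H` (viewed as maps of the closed unit ball `H₁` to itself)
is *uniformly equicontinuous (UEC) for the weak uniformity* if for every `ε > 0` and all
vectors `x₁, …, x_N ∈ H₁` there exist `δ > 0` and vectors `w₁, …, w_M ∈ H₁` such that for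
all `ξ, η ∈ H₁` with `|⟪ξ - η, w_j⟫| < δ` for all `j`, and every member of the family,
`|⟪F k ξ - F k η, x_i⟫| < ε` for all `i`. -/
def UECweak {H : Type*} [NormedAddCommGroup H] [InnerProductSpace ℂ H]
    {ι : Type*} (F : ι → H → H) : Prop :=
  ∀ ε : ℝ, 0 < ε → ∀ (N : ℕ) (x : Fin N → H), (∀ i, ‖x i‖ ≤ 1) →
    ∃ (δ : ℝ) (M : ℕ) (w : Fin M → H), 0 < δ ∧ (∀ j, ‖w j‖ ≤ 1) ∧
      ∀ ξ η : H, ‖ξ‖ ≤ 1 → ‖η‖ ≤ 1 →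
        (∀ j, ‖⟪ξ - η, w j⟫_ℂ‖ < δ) →
        ∀ (k : ι) (i : Fin N), ‖⟪F k ξ - F k η, x i⟫_ℂ‖ < ε

noncomputable section ShiftAux

abbrev HS : Type := lp (fun _ : ℕ => ℂ) 2

lemma two_toReal : (2 : ENNReal).toReal = 2 := by norm_num

lemma summable_sq (f : HS) : Summable fun k => ‖f k‖ ^ (2 : ℝ) := by
  have := lp.memℓp f
  rw [memℓp_gen_iff (by norm_num : 0 < (2:ENNReal).toReal)] at this
  simpa [two_toReal] using this

/-- forward shift by n on functions -/
def fwdFun (n : ℕ) (f : ℕ → ℂ) : ℕ → ℂ := fun k => if _ : n ≤ k then f (k - n) else 0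

def bwdFun (n : ℕ) (f : ℕ → ℂ) : ℕ → ℂ := fun k => f (k + n)

lemma fwdFun_add (n : ℕ) (f : ℕ → ℂ) (k : ℕ) : fwdFun n f (k + n) = f k := by
  simp [fwdFun]

lemma fwdFun_lt (n : ℕ) (f : ℕ → ℂ) {k : ℕ} (h : k < n) : fwdFun n f k = 0 := by
  simp [fwdFun, not_le.2 h]

lemma memfwd (n : ℕ) (f : HS) : Memℓp (fwdFun n f) 2 := by
  apply memℓp_gen
  rw [two_toReal]
  have hinj : Function.Injective (fun k : ℕ => k + n) := add_left_injective n
  rw [← Function.Injective.summable_iff hinj (f := fun k => ‖fwdFun n f k‖ ^ (2:ℝ))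
    (by
      intro k hk
      have hkn : k < n := by
        by_contra h
        exact hk ⟨k - n, by simp only []; omega⟩
      simp [fwdFun_lt n f hkn, Real.zero_rpow (by norm_num : (2:ℝ) ≠ 0)])]
  have h2 : ((fun k => ‖fwdFun n f k‖ ^ (2:ℝ)) ∘ (fun k : ℕ => k + n))
      = fun k => ‖f k‖ ^ (2:ℝ) := by
    funext k; simp [Function.comp, fwdFun_add]
  rw [h2]
  exact summable_sq f

lemma membwd (n : ℕ) (f : HS) : Memℓp (bwdFun n f) 2 := by
  apply memℓp_gen
  rw [two_toReal]
  exact (summable_nat_add_iff n).2 (summable_sq f)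

lemma rpow_two_eq_iff {a b : ℝ} (ha : 0 ≤ a) (hb : 0 ≤ b)
    (h : a ^ (2:ENNReal).toReal = b ^ (2:ENNReal).toReal) : a = b := by
  rw [two_toReal, show (2:ℝ) = ((2:ℕ):ℝ) by norm_num, Real.rpow_natCast,
    Real.rpow_natCast] at h
  exact (pow_left_inj₀ ha hb (by norm_num)).1 h

lemma rpow_two_le_iff {a b : ℝ} (ha : 0 ≤ a) (hb : 0 ≤ b)
    (h : a ^ (2:ENNReal).toReal ≤ b ^ (2:ENNReal).toReal) : a ≤ b := by
  rw [two_toReal, show (2:ℝ) = ((2:ℕ):ℝ) by norm_num, Real.rpow_natCast,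
    Real.rpow_natCast] at h
  exact (pow_le_pow_iff_left₀ ha hb (by norm_num)).1 h

/-- forward shift as a linear map -/
def Slm (n : ℕ) : HS →ₗ[ℂ] HS where
  toFun f := ⟨fwdFun n f, memfwd n f⟩
  map_add' f g := by
    apply lp.ext
    funext k
    change fwdFun n (f + g) k = fwdFun n f k + fwdFun n g k
    by_cases h : n ≤ k <;> simp [fwdFun, h]
  map_smul' c f := by
    apply lp.ext
    funext k
    by_cases h : n ≤ k <;> simp [fwdFun, h]

/-- backward shift as a linear map -/
def Blm (n : ℕ) : HS →ₗ[ℂ] HS where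
  toFun f := ⟨bwdFun n f, membwd n f⟩
  map_add' f g := by
    apply lp.ext
    funext k
    change (f + g) (k + n) = f (k + n) + g (k + n)
    simp [bwdFun]
  map_smul' c f := by
    apply lp.ext
    funext k
    simp [bwdFun]

lemma Slm_apply (n : ℕ) (f : HS) (k : ℕ) : (Slm n f : ℕ → ℂ) k = fwdFun n f k := rfl
lemma Blm_apply (n : ℕ) (f : HS) (k : ℕ) : (Blm n f : ℕ → ℂ) k = f (k + n) := rfl

lemma norm_Slm (n : ℕ) (f : HS) : ‖Slm n f‖ = ‖f‖ := by
  have h2 : (0:ℝ) < (2:ENNReal).toReal := by norm_num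
  have ha := lp.norm_rpow_eq_tsum h2 (Slm n f)
  have hb := lp.norm_rpow_eq_tsum h2 f
  have hinj : Function.Injective (fun k : ℕ => k + n) := add_left_injective n
  have key : ∑' k, ‖(Slm n f : ℕ → ℂ) k‖ ^ (2:ENNReal).toReal
      = ∑' k, ‖f k‖ ^ (2:ENNReal).toReal := by
    rw [← Function.Injective.tsum_eq hinj (f := fun k => ‖(Slm n f : ℕ → ℂ) k‖ ^ (2:ENNReal).toReal)
      (by
        intro k hk
        by_contra hr
        have hkn : k < n := by
          by_contra h
          exact hr ⟨k - n, by simp only []; omega⟩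
        simp [Function.mem_support, Slm_apply, fwdFun_lt n f hkn, two_toReal,
          Real.zero_rpow (by norm_num : (2:ℝ) ≠ 0)] at hk)]
    congr 1
    funext k
    simp [Slm_apply, fwdFun_add]
  have : ‖Slm n f‖ ^ (2:ENNReal).toReal = ‖f‖ ^ (2:ENNReal).toReal := by
    rw [ha, hb, key]
  exact rpow_two_eq_iff (norm_nonneg _) (norm_nonneg _) this

lemma norm_Blm_le (n : ℕ) (f : HS) : ‖Blm n f‖ ≤ ‖f‖ := by
  have h2 : (0:ℝ) < (2:ENNReal).toReal := by norm_num
  have ha := lp.norm_rpow_eq_tsum h2 (Blm n f)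
  have hb := lp.norm_rpow_eq_tsum h2 f
  have key : ∑' k, ‖(Blm n f : ℕ → ℂ) k‖ ^ (2:ENNReal).toReal
      ≤ ∑' k, ‖f k‖ ^ (2:ENNReal).toReal := by
    rw [two_toReal]
    refine Summable.tsum_le_tsum_of_inj (fun k : ℕ => k + n) (add_left_injective n)
      (fun c _ => by positivity) (fun k => by simp [Blm_apply]) ?_ ?_
    · simpa [two_toReal, Blm_apply] using (summable_nat_add_iff n).2 (summable_sq f)
    · exact summable_sq f
  have hle : ‖Blm n f‖ ^ (2:ENNReal).toReal ≤ ‖f‖ ^ (2:ENNReal).toReal := by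
    rw [ha, hb]; exact key
  exact rpow_two_le_iff (norm_nonneg _) (norm_nonneg _) hle


/-- forward shift as continuous linear map -/
def Sop (n : ℕ) : HS →L[ℂ] HS :=
  (Slm n).mkContinuous 1 (fun f => by rw [norm_Slm]; simp)

/-- backward shift as continuous linear map -/
def Bop (n : ℕ) : HS →L[ℂ] HS :=
  (Blm n).mkContinuous 1 (fun f => by simpa using norm_Blm_le n f)

lemma Sop_coe (n : ℕ) (f : HS) (k : ℕ) : (Sop n f : ℕ → ℂ) k = fwdFun n f k := rfl
lemma Bop_coe (n : ℕ) (f : HS) (k : ℕ) : (Bop n f : ℕ → ℂ) k = f (k + n) := rfl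

lemma norm_Sop_le (n : ℕ) : ‖Sop n‖ ≤ 1 :=
  LinearMap.mkContinuous_norm_le _ zero_le_one _

lemma norm_Bop_apply_le (n : ℕ) (f : HS) : ‖Bop n f‖ ≤ ‖f‖ := norm_Blm_le n f

lemma inner_Sop (n : ℕ) (f g : HS) : ⟪Sop n f, g⟫_ℂ = ⟪f, Bop n g⟫_ℂ := by
  rw [lp.inner_eq_tsum, lp.inner_eq_tsum]
  rw [← Function.Injective.tsum_eq (add_left_injective n)
    (f := fun k => ⟪(Sop n f : ℕ → ℂ) k, (g : ℕ → ℂ) k⟫_ℂ) ?_]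
  · congr 1
    funext k
    rw [Sop_coe, fwdFun_add, Bop_coe]
  · intro k hk
    by_contra hr
    have hkn : k < n := by
      by_contra h
      exact hr ⟨k - n, by simp only []; omega⟩
    simp [Function.mem_support, Sop_coe, fwdFun_lt n f hkn] at hk

lemma adjoint_Sop (n : ℕ) : ContinuousLinearMap.adjoint (Sop n) = Bop n := by
  symm
  rw [ContinuousLinearMap.eq_adjoint_iff]
  intro u v
  calc ⟪Bop n u, v⟫_ℂ = (starRingEnd ℂ) ⟪v, Bop n u⟫_ℂ := (inner_conj_symm _ _).symm
    _ = (starRingEnd ℂ) ⟪Sop n v, u⟫_ℂ := by rw [inner_Sop]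
    _ = ⟪u, Sop n v⟫_ℂ := inner_conj_symm _ _

lemma tendsto_of_rpow_two {u : ℕ → ℝ} (hu : ∀ n, 0 ≤ u n)
    (h : Filter.Tendsto (fun n => u n ^ (2:ENNReal).toReal) Filter.atTop (nhds 0)) :
    Filter.Tendsto u Filter.atTop (nhds 0) := by
  have h2 := (Real.continuous_sqrt.tendsto 0).comp h
  simp only [Function.comp_def, Real.sqrt_zero] at h2
  convert h2 using 2 with n
  rw [two_toReal, show (2:ℝ) = ((2:ℕ):ℝ) by norm_num, Real.rpow_natCast,
    Real.sqrt_sq (hu n)]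

lemma tendsto_norm_Bop (x : HS) :
    Filter.Tendsto (fun n => ‖Bop n x‖) Filter.atTop (nhds 0) := by
  apply tendsto_of_rpow_two (fun n => norm_nonneg _)
  have heq : (fun n => ‖Bop n x‖ ^ (2:ENNReal).toReal)
      = fun n => ∑' k, ‖x (k + n)‖ ^ (2:ℝ) := by
    funext n
    rw [lp.norm_rpow_eq_tsum (by norm_num) (Bop n x)]
    rw [two_toReal]
    congr 1
  rw [heq]
  exact tendsto_sum_nat_add (fun k => ‖x k‖ ^ (2:ℝ))

lemma tendsto_norm_coord (x : HS) :
    Filter.Tendsto (fun n => ‖(x : ℕ → ℂ) n‖) Filter.atTop (nhds 0) := by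
  apply tendsto_of_rpow_two (fun n => norm_nonneg _)
  rw [two_toReal]
  exact (summable_sq x).tendsto_atTop_zero

end ShiftAux


lemma norm_single_one (n : ℕ) : ‖(lp.single 2 n (1:ℂ) : HS)‖ = 1 := by
  simpa using lp.norm_single (p := 2) (by norm_num) (fun _ : ℕ => (1:ℂ)) n

/-- There exist a complex Hilbert space `H` and a family `𝒯` of operators on `H` of norm
at most `1` such that `𝒯`, viewed as a family of maps `H₁ → H₁`, is UEC for the weak
uniformity, while the family of adjoints `𝒯* = {T* : T ∈ 𝒯}` is not UEC for the weak
uniformity.  (One may take `H = ℓ²(ℕ)` and `𝒯` the powers of the right unilateral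
shift.) -/
theorem exists_uecWeak_family_with_adjoints_not_uecWeak :
    ∃ (H : Type) (_ : NormedAddCommGroup H) (_ : InnerProductSpace ℂ H) (_ : CompleteSpace H)
      (𝒯 : Set (H →L[ℂ] H)),
      (∀ T ∈ 𝒯, ‖T‖ ≤ 1) ∧
      UECweak (fun T : 𝒯 => fun ξ : H => (T : H →L[ℂ] H) ξ) ∧
      ¬ UECweak (fun T : 𝒯 => fun ξ : H =>
          (ContinuousLinearMap.adjoint (T : H →L[ℂ] H)) ξ) := by
  refine ⟨HS, inferInstance, inferInstance, inferInstance, Set.range Sop, ?_, ?_, ?_⟩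
  · rintro T ⟨n, rfl⟩
    exact norm_Sop_le n
  · -- the forward shifts are UEC for the weak uniformity
    intro ε hε N x hx
    have htail : ∀ i : Fin N, ∃ K : ℕ, ∀ n, K ≤ n → ‖Bop n (x i)‖ < ε / 4 := by
      intro i
      exact Filter.eventually_atTop.1
        ((tendsto_norm_Bop (x i)).eventually_lt_const (by positivity : (0:ℝ) < ε / 4))
    choose K hK using htail
    set K0 := Finset.univ.sup K with hK0
    refine ⟨ε, N * K0,
      fun j => Bop ((finProdFinEquiv.symm j).2 : ℕ) (x (finProdFinEquiv.symm j).1),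
      hε, ?_, ?_⟩
    · intro j
      exact (norm_Bop_apply_le _ _).trans (hx _)
    · intro ξ η hξ hη hw k i
      obtain ⟨n, hn⟩ := k.2
      show ‖⟪(k : HS →L[ℂ] HS) ξ - (k : HS →L[ℂ] HS) η, x i⟫_ℂ‖ < ε
      rw [← hn, ← map_sub, inner_Sop]
      by_cases hlt : n < K0
      · have h := hw (finProdFinEquiv (i, ⟨n, hlt⟩))
        simp only [Equiv.symm_apply_apply] at h
        exact h
      · push_neg at hlt
        have hKi : K i ≤ n := le_trans (Finset.le_sup (Finset.mem_univ i)) hlt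
        calc ‖⟪ξ - η, Bop n (x i)⟫_ℂ‖ ≤ ‖ξ - η‖ * ‖Bop n (x i)‖ := norm_inner_le_norm _ _
          _ ≤ 2 * (ε / 4) := by
              apply mul_le_mul ?_ (hK i n hKi).le (norm_nonneg _) (by norm_num)
              calc ‖ξ - η‖ ≤ ‖ξ‖ + ‖η‖ := norm_sub_le _ _
                _ ≤ 2 := by linarith
          _ < ε := by linarith
  · -- the backward shifts are not UEC
    intro hUEC
    obtain ⟨δ, M, w, hδ, hwnorm, hmain⟩ := hUEC 1 one_pos 1 (fun _ => lp.single 2 0 1)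
      (fun _ => le_of_eq (norm_single_one 0))
    have hco : ∀ᶠ n in Filter.atTop, ∀ j : Fin M, ‖(w j : ℕ → ℂ) n‖ < δ := by
      rw [Filter.eventually_all]
      intro j
      exact (tendsto_norm_coord (w j)).eventually_lt_const hδ
    obtain ⟨n, hn⟩ := hco.exists
    have hξ : ‖(lp.single 2 n 1 : HS)‖ ≤ 1 := le_of_eq (norm_single_one n)
    have hcontr := hmain (lp.single 2 n 1) 0 hξ (by simp) ?_ ⟨Sop n, ⟨n, rfl⟩⟩ 0
    · revert hcontr
      show ¬ ‖⟪(ContinuousLinearMap.adjoint (Sop n)) (lp.single 2 n 1)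
          - (ContinuousLinearMap.adjoint (Sop n)) 0, lp.single 2 0 1⟫_ℂ‖ < 1
      rw [map_zero, sub_zero, adjoint_Sop, lp.inner_single_right]
      have hval : (Bop n (lp.single 2 n 1) : ℕ → ℂ) 0 = 1 := by
        rw [Bop_coe, zero_add, lp.single_apply_self]
      rw [hval]
      simp
    · intro j
      rw [sub_zero, lp.inner_single_left]
      simpa using hn j
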